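/- arXiv:0910.2252 — 3 statements merged into one kernel-verified Lean document; each statement's English description precedes it below -/
import Mathlib

section
/- For every f in X = ℓ¹([0,1], ℂ), the norm of f is recovered from the continuous functions: ‖f‖₁ = sup { |∑_{x ∈ [0,1]} g(x) f(x)| : g ∈ C([0,1], ℂ), ‖g‖_∞ ≤ 1 }. In other words, C[0,1] is a determinant (1-norming) subspace of X* = B[0,1]. -/
/-- `C[0,1]` is a determinant (1-norming) subspace of `X* = B[0,1]`: for every
`f ∈ X = ℓ¹([0,1], ℂ)`,
`‖f‖₁ = sup { |∑_x g(x) f(x)| : g ∈ C([0,1], ℂ), ‖g‖_∞ ≤ 1 }`. -/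
theorem l1_norm_eq_sSup_pairing_continuous
    (f : lp (fun _ : unitInterval => ℂ) 1) :
    ‖f‖ = sSup { r : ℝ | ∃ g : C(unitInterval, ℂ), ‖g‖ ≤ 1 ∧
        r = ‖∑' x : unitInterval, g x * f x‖ } := by
  classical
  set S := { r : ℝ | ∃ g : C(unitInterval, ℂ), ‖g‖ ≤ 1 ∧
      r = ‖∑' x : unitInterval, g x * f x‖ } with hS
  have hp : (0:ℝ) < (1 : ENNReal).toReal := by norm_num
  have hnorm : HasSum (fun x : unitInterval => ‖f x‖) ‖f‖ := by
    simpa using lp.hasSum_norm hp f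
  have hsum : Summable fun x : unitInterval => ‖f x‖ := hnorm.summable
  have htsum : ∑' x : unitInterval, ‖f x‖ = ‖f‖ := hnorm.tsum_eq
  -- every element of S is ≤ ‖f‖
  have hub : ∀ r ∈ S, r ≤ ‖f‖ := by
    rintro r ⟨g, hg, rfl⟩
    have hb : ∀ x : unitInterval, ‖g x * f x‖ ≤ ‖f x‖ := by
      intro x
      rw [norm_mul]
      calc ‖g x‖ * ‖f x‖ ≤ 1 * ‖f x‖ := by
            gcongr
            exact (g.norm_coe_le_norm x).trans hg
        _ = ‖f x‖ := one_mul _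
    have hsg : Summable fun x : unitInterval => ‖g x * f x‖ :=
      hsum.of_nonneg_of_le (fun x => norm_nonneg _) hb
    calc ‖∑' x : unitInterval, g x * f x‖ ≤ ∑' x, ‖g x * f x‖ :=
          norm_tsum_le_tsum_norm hsg
      _ ≤ ∑' x, ‖f x‖ := Summable.tsum_le_tsum hb hsg hsum
      _ = ‖f‖ := htsum
  have hne : S.Nonempty := ⟨‖∑' x : unitInterval, (0 : C(unitInterval, ℂ)) x * f x‖,
    0, by simp, rfl⟩
  have hbdd : BddAbove S := ⟨‖f‖, hub⟩
  refine le_antisymm ?_ (csSup_le hne hub)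
  refine le_of_forall_pos_le_add fun ε hε => ?_
  -- choose a finset capturing most of the norm
  obtain ⟨s, hs⟩ : ∃ s : Finset unitInterval, ‖f‖ - ε/2 < ∑ x ∈ s, ‖f x‖ :=
    (hnorm.eventually (eventually_gt_nhds (by linarith))).exists
  -- the phase function
  set v : unitInterval → ℂ := fun x => (‖f x‖ : ℂ) / f x with hv
  have hvmul : ∀ x : unitInterval, v x * f x = (‖f x‖ : ℂ) := by
    intro x
    by_cases h : f x = 0
    · simp [hv, h]
    · simp only [hv]; exact div_mul_cancel₀ _ h
  have hvball : ∀ x : unitInterval, v x ∈ Metric.closedBall (0:ℂ) 1 := by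
    intro x
    rw [Metric.mem_closedBall, dist_zero_right, hv]
    by_cases h : f x = 0
    · simp [h]
    · rw [norm_div, Complex.norm_real, Real.norm_of_nonneg (norm_nonneg _),
        div_self (norm_ne_zero_iff.mpr h)]
  -- extend to a continuous map
  have hclosed : IsClosed (↑s : Set unitInterval) := s.finite_toSet.isClosed
  let f₀ : C((↑s : Set unitInterval), ℂ) := ⟨fun x => v x, continuous_of_discreteTopology⟩
  obtain ⟨g, hgball, hgr⟩ := f₀.exists_forall_mem_restrict_eq hclosed
    (fun x => hvball x) (t := Metric.closedBall (0:ℂ) 1)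
  have hg1 : ‖g‖ ≤ 1 := by
    rw [ContinuousMap.norm_le _ zero_le_one]
    intro x
    simpa [dist_zero_right] using hgball x
  have hgs : ∀ x ∈ s, g x = v x := by
    intro x hx
    exact congrFun (congrArg (fun h : C((↑s : Set unitInterval), ℂ) => (h : _ → ℂ)) hgr)
      ⟨x, hx⟩
  -- summability
  have hsg : Summable fun x : unitInterval => g x * f x := by
    refine hsum.of_norm_bounded fun x => ?_
    rw [norm_mul]
    calc ‖g x‖ * ‖f x‖ ≤ 1 * ‖f x‖ := by
          gcongr; exact (g.norm_coe_le_norm x).trans hg1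
      _ = ‖f x‖ := one_mul _
  have hsplit := Summable.sum_add_tsum_compl (s := s) hsg
  have hsplitn := Summable.sum_add_tsum_compl (s := s) hsum
  -- the head sum
  have hhead : ∑ x ∈ s, g x * f x = ((∑ x ∈ s, ‖f x‖ : ℝ) : ℂ) := by
    push_cast
    refine Finset.sum_congr rfl fun x hx => ?_
    rw [hgs x hx, hvmul x]
  -- tail bound
  have htail : ‖∑' x : ((↑s : Set unitInterval)ᶜ : Set unitInterval), g x * f x‖
      ≤ ∑' x : ((↑s : Set unitInterval)ᶜ : Set unitInterval), ‖f x‖ := by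
    refine (norm_tsum_le_tsum_norm ?_).trans (Summable.tsum_le_tsum ?_ ?_ ?_)
    · refine (hsum.subtype _).of_nonneg_of_le (fun x => norm_nonneg _) fun x => ?_
      rw [norm_mul]
      calc ‖g x‖ * ‖f x‖ ≤ 1 * ‖f x‖ := by
            gcongr; exact (g.norm_coe_le_norm _).trans hg1
        _ = ‖f.1 x‖ := one_mul _
    · intro x
      rw [norm_mul]
      calc ‖g x‖ * ‖f x‖ ≤ 1 * ‖f x‖ := by
            gcongr; exact (g.norm_coe_le_norm _).trans hg1
        _ = ‖f.1 x‖ := one_mul _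
    · refine (hsum.subtype _).of_nonneg_of_le (fun x => norm_nonneg _) fun x => ?_
      rw [norm_mul]
      calc ‖g x‖ * ‖f x‖ ≤ 1 * ‖f x‖ := by
            gcongr; exact (g.norm_coe_le_norm _).trans hg1
        _ = ‖f.1 x‖ := one_mul _
    · exact hsum.subtype _
  have htail2 : ∑' x : ((↑s : Set unitInterval)ᶜ : Set unitInterval), ‖f x‖
      = ‖f‖ - ∑ x ∈ s, ‖f x‖ := by
    rw [htsum] at hsplitn; linarith
  -- lower bound for the element of S
  have hlow : ‖f‖ - ε ≤ ‖∑' x : unitInterval, g x * f x‖ := by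
    have h1 : ‖(∑ x ∈ s, g x * f x : ℂ)‖ = ∑ x ∈ s, ‖f x‖ := by
      rw [hhead, Complex.norm_real, Real.norm_of_nonneg]
      exact Finset.sum_nonneg fun x _ => norm_nonneg _
    have h2 : ‖(∑ x ∈ s, g x * f x : ℂ)‖
        - ‖∑' x : ((↑s : Set unitInterval)ᶜ : Set unitInterval), g x * f x‖
        ≤ ‖∑' x : unitInterval, g x * f x‖ := by
      rw [← hsplit]
      have := norm_le_add_norm_add (∑ x ∈ s, g x * f x)
        (∑' x : ((↑s : Set unitInterval)ᶜ : Set unitInterval), g x * f x)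
      linarith
    rw [h1] at h2
    have := htail.trans_eq htail2
    linarith
  have hmem : ‖∑' x : unitInterval, g x * f x‖ ∈ S := ⟨g, hg1, rfl⟩
  have := le_csSup hbdd hmem
  linarith
end

section
/- The closed unit ball C = { f ∈ X : ‖f‖₁ ≤ 1 } of X = ℓ¹([0,1], ℂ) equals the intersection ⋂_{g} { f ∈ X : |∑_{x ∈ [0,1]} g(x) f(x)| ≤ 1 }, taken over all g ∈ C([0,1], ℂ) with ‖g‖_∞ ≤ 1; consequently C is closed in the weak topology σ(X, C[0,1]) induced by the pairing with C([0,1], ℂ). -/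
open scoped ComplexOrder in
theorem aux_norm_le
    (f : lp (fun _ : unitInterval => ℂ) 1)
    (hf : ∀ g : C(unitInterval, ℂ), ‖g‖ ≤ 1 →
      ‖∑' x : unitInterval, g x * f x‖ ≤ 1) : ‖f‖ ≤ 1 := by
  by_contra hlt
  push_neg at hlt
  have hsum : HasSum (fun x : unitInterval => ‖f x‖) ‖f‖ := by
    simpa using lp.hasSum_norm (p := 1) (by norm_num) f
  set T := ‖f‖ with hT
  set ε := (T - 1) / 2 with hε
  have hεpos : 0 < ε := by dsimp [ε]; linarith
  -- find a finset s with sum close to T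
  obtain ⟨s, hs⟩ := (Metric.tendsto_nhds.mp hsum (ε) hεpos).exists
  have hs' : T - ε < ∑ x ∈ s, ‖f x‖ := by
    rw [Real.dist_eq] at hs
    have := abs_lt.mp hs
    linarith [this.1]
  -- the interpolation data
  classical
  let d : unitInterval → ℂ := fun x => if f x = 0 then 0 else (starRingEnd ℂ) (f x) / ‖f x‖
  have hd_norm : ∀ x, ‖d x‖ ≤ 1 := by
    intro x
    by_cases h : f x = 0
    · simp [d, h]
    · simp only [d, if_neg h]
      rw [norm_div]
      simp [RCLike.norm_conj, h]
  have hd_mul : ∀ x, d x * f x = (‖f x‖ : ℂ) := by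
    intro x
    by_cases h : f x = 0
    · simp [d, h]
    · simp only [d, if_neg h]
      have habs : ‖f x‖ ≠ 0 := by simpa using h
      field_simp
      rw [mul_comm, Complex.mul_conj', sq]
  -- Tietze extension of d on the finite set s
  have hSclosed : IsClosed (↑s : Set unitInterval) := s.finite_toSet.isClosed
  haveI : Finite (↑s : Set unitInterval) := s.finite_toSet
  haveI : DiscreteTopology (↑s : Set unitInterval) := by
    infer_instance
  let d₀ : C((↑s : Set unitInterval), ℂ) := ⟨fun x => d x, continuous_of_discreteTopology⟩
  have hmem : ∀ x : (↑s : Set unitInterval), d₀ x ∈ Metric.closedBall (0 : ℂ) 1 := by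
    intro x
    simpa [Metric.mem_closedBall, d₀] using hd_norm x
  obtain ⟨g, hgmem, hgres⟩ := ContinuousMap.exists_forall_mem_restrict_eq hSclosed d₀ hmem
  have hgx : ∀ x ∈ s, g x = d x := by
    intro x hx
    have := congrFun (congrArg DFunLike.coe hgres) ⟨x, hx⟩
    exact this
  have hg1 : ‖g‖ ≤ 1 := by
    refine (ContinuousMap.norm_le _ zero_le_one).mpr fun x => ?_
    simpa [Metric.mem_closedBall] using hgmem x
  -- summability of the paired sum
  have hsumf : Summable fun x : unitInterval => ‖f x‖ := hsum.summable
  have hbound : ∀ x : unitInterval, ‖g x * f x‖ ≤ ‖f x‖ := by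
    intro x
    rw [norm_mul]
    have h1 : ‖g x‖ ≤ 1 := by simpa [Metric.mem_closedBall] using hgmem x
    exact mul_le_of_le_one_left (norm_nonneg _) h1
  have hsumgf : Summable fun x : unitInterval => g x * f x :=
    Summable.of_norm_bounded hsumf hbound
  -- split the sum
  have hsplit : ∑ x ∈ s, g x * f x + ∑' x : ((↑s : Set unitInterval)ᶜ : Set unitInterval), g x * f x
      = ∑' x : unitInterval, g x * f x := Summable.sum_add_tsum_compl hsumgf
  have hsum_on_s : ∑ x ∈ s, g x * f x = ((∑ x ∈ s, ‖f x‖ : ℝ) : ℂ) := by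
    push_cast
    refine Finset.sum_congr rfl fun x hx => ?_
    rw [hgx x hx, hd_mul x]
  -- tail bound
  have hnormtail : Summable fun x : ((↑s : Set unitInterval)ᶜ : Set unitInterval) => ‖g x.1 * f x.1‖ :=
    Summable.of_nonneg_of_le (fun _ => norm_nonneg _) (fun x => hbound x.1) (hsumf.subtype _)
  have htail_norm : ‖∑' x : ((↑s : Set unitInterval)ᶜ : Set unitInterval), g x * f x‖
      ≤ ∑' x : ((↑s : Set unitInterval)ᶜ : Set unitInterval), ‖f x.1‖ := by
    refine (norm_tsum_le_tsum_norm hnormtail).trans ?_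
    exact Summable.tsum_le_tsum (fun x => hbound x.1) hnormtail (hsumf.subtype _)
  have htail_val : ∑' x : ((↑s : Set unitInterval)ᶜ : Set unitInterval), ‖f x.1‖
      = T - ∑ x ∈ s, ‖f x‖ := by
    have h := Summable.sum_add_tsum_compl (s := s) hsumf
    rw [hsum.tsum_eq] at h
    linarith
  -- conclude
  have hkey := hf g hg1
  rw [← hsplit] at hkey
  have h1 : ‖∑ x ∈ s, g x * f x‖ = ∑ x ∈ s, ‖f x‖ := by
    rw [hsum_on_s, Complex.norm_real,
      Real.norm_of_nonneg (Finset.sum_nonneg fun _ _ => norm_nonneg _)]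
  have h2 : ‖∑ x ∈ s, g x * f x‖ - ‖∑' x : ((↑s : Set unitInterval)ᶜ : Set unitInterval), g x * f x‖
      ≤ ‖∑ x ∈ s, g x * f x + ∑' x : ((↑s : Set unitInterval)ᶜ : Set unitInterval), g x * f x‖ := by
    have := norm_add_le (∑ x ∈ s, g x * f x + ∑' x : ((↑s : Set unitInterval)ᶜ : Set unitInterval), g x * f x)
      (-(∑' x : ((↑s : Set unitInterval)ᶜ : Set unitInterval), g x * f x))
    simp only [add_neg_cancel_right, norm_neg] at this
    linarith
  rw [h1] at h2
  rw [htail_val] at htail_norm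
  have hεT : ε = (T - 1) / 2 := hε
  linarith

/-- The closed unit ball `C` of `X = ℓ¹([0,1], ℂ)` equals the intersection of the sets
`{f : |∑_x g(x) f(x)| ≤ 1}` over all continuous `g` with `‖g‖_∞ ≤ 1`; consequently it is
closed in the weak topology `σ(X, C[0,1])` induced by the pairing
`B(f)(g) = ∑_x g(x) f(x)` with `C([0,1], ℂ)`. -/
theorem unit_ball_weakly_closed_l1_pairing_continuous
    (B : lp (fun _ : unitInterval => ℂ) 1 →ₗ[ℂ] C(unitInterval, ℂ) →ₗ[ℂ] ℂ)
    (hB : ∀ (f : lp (fun _ : unitInterval => ℂ) 1) (g : C(unitInterval, ℂ)),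
      B f g = ∑' x : unitInterval, g x * f x) :
    ({ f : lp (fun _ : unitInterval => ℂ) 1 | ‖f‖ ≤ 1 } =
        ⋂ g ∈ { g : C(unitInterval, ℂ) | ‖g‖ ≤ 1 },
          { f : lp (fun _ : unitInterval => ℂ) 1 |
            ‖∑' x : unitInterval, g x * f x‖ ≤ 1 }) ∧
      IsClosed (show Set (WeakBilin B) from
        { f : lp (fun _ : unitInterval => ℂ) 1 | ‖f‖ ≤ 1 }) := by
  have heq : ({ f : lp (fun _ : unitInterval => ℂ) 1 | ‖f‖ ≤ 1 } =
      ⋂ g ∈ { g : C(unitInterval, ℂ) | ‖g‖ ≤ 1 },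
        { f : lp (fun _ : unitInterval => ℂ) 1 |
          ‖∑' x : unitInterval, g x * f x‖ ≤ 1 }) := by
    ext f
    simp only [Set.mem_setOf_eq, Set.mem_iInter]
    constructor
    · intro hf g hg
      have hsum : HasSum (fun x : unitInterval => ‖f x‖) ‖f‖ := by
        simpa using lp.hasSum_norm (p := 1) (by norm_num) f
      have hsumf : Summable fun x : unitInterval => ‖f x‖ := hsum.summable
      have hbound : ∀ x : unitInterval, ‖g x * f x‖ ≤ ‖f x‖ := by
        intro x
        rw [norm_mul]
        exact mul_le_of_le_one_left (norm_nonneg _) ((g.norm_coe_le_norm x).trans hg)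
      have hns : Summable fun x : unitInterval => ‖g x * f x‖ :=
        Summable.of_nonneg_of_le (fun _ => norm_nonneg _) hbound hsumf
      calc ‖∑' x : unitInterval, g x * f x‖
          ≤ ∑' x : unitInterval, ‖g x * f x‖ := norm_tsum_le_tsum_norm hns
        _ ≤ ∑' x : unitInterval, ‖f x‖ := Summable.tsum_le_tsum hbound hns hsumf
        _ = ‖f‖ := hsum.tsum_eq
        _ ≤ 1 := hf
    · intro hf
      exact aux_norm_le f hf
  refine ⟨heq, ?_⟩
  rw [show ({ f : lp (fun _ : unitInterval => ℂ) 1 | ‖f‖ ≤ 1 } : Set (WeakBilin B)) =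
      ⋂ g ∈ { g : C(unitInterval, ℂ) | ‖g‖ ≤ 1 },
        { f : lp (fun _ : unitInterval => ℂ) 1 |
          ‖∑' x : unitInterval, g x * f x‖ ≤ 1 } from heq]
  refine isClosed_biInter fun g _ => ?_
  have : ({ f : lp (fun _ : unitInterval => ℂ) 1 |
      ‖∑' x : unitInterval, g x * f x‖ ≤ 1 } : Set (WeakBilin B)) =
      (fun f : WeakBilin B => B f g) ⁻¹' Metric.closedBall 0 1 := by
    ext f
    simp only [Set.mem_preimage, Metric.mem_closedBall, dist_zero_right, hB,
      Set.mem_setOf_eq]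
    rw [hB f g]
    exact Iff.rfl
  refine (congrArg IsClosed this).mpr ?_
  exact Metric.isClosed_closedBall.preimage (WeakBilin.eval_continuous B g)
end

section
/- The map F : X → C([0,1], ℂ)* defined by F(f)(g) = ∑_{x ∈ [0,1]} f(x) g(x) is a linear isometry from X = ℓ¹([0,1], ℂ) into the continuous dual of C([0,1], ℂ): for all f ∈ X, the operator norm of F(f) equals ‖f‖₁. -/
namespace L1Dual

variable (f : lp (fun _ : unitInterval => ℂ) 1)

lemma summable_norm : Summable (fun x : unitInterval => ‖f x‖) := by
  have := (lp.memℓp f).summable (p := 1) (by norm_num)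
  simpa using this

lemma hasSum_norm' : HasSum (fun x : unitInterval => ‖f x‖) ‖f‖ := by
  simpa using lp.hasSum_norm (p := 1) (by norm_num) f

lemma summable_mul (g : C(unitInterval, ℂ)) :
    Summable (fun x : unitInterval => f x * g x) := by
  apply Summable.of_norm
  apply Summable.of_nonneg_of_le (fun x => norm_nonneg _)
    (fun x => ?_) ((summable_norm f).mul_right ‖g‖)
  rw [norm_mul]
  exact mul_le_mul_of_nonneg_left (g.norm_coe_le_norm x) (norm_nonneg _)

lemma norm_tsum_le (g : C(unitInterval, ℂ)) :
    ‖∑' x : unitInterval, f x * g x‖ ≤ ‖f‖ * ‖g‖ := by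
  calc ‖∑' x : unitInterval, f x * g x‖ ≤ ∑' x : unitInterval, ‖f x * g x‖ := by
        apply norm_tsum_le_tsum_norm
        apply Summable.of_nonneg_of_le (fun x => norm_nonneg _)
          (fun x => ?_) ((summable_norm f).mul_right ‖g‖)
        rw [norm_mul]
        exact mul_le_mul_of_nonneg_left (g.norm_coe_le_norm x) (norm_nonneg _)
    _ ≤ ∑' x : unitInterval, ‖f x‖ * ‖g‖ := by
        apply Summable.tsum_le_tsum _ ((summable_mul f g).norm) ((summable_norm f).mul_right ‖g‖)
        intro x
        rw [norm_mul]
        exact mul_le_mul_of_nonneg_left (g.norm_coe_le_norm x) (norm_nonneg _)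
    _ = ‖f‖ * ‖g‖ := by rw [tsum_mul_right, (hasSum_norm' f).tsum_eq]

noncomputable def Ffun : StrongDual ℂ C(unitInterval, ℂ) :=
  LinearMap.mkContinuous
    { toFun := fun g => ∑' x : unitInterval, f x * g x
      map_add' := fun g h => by
        simp only [ContinuousMap.add_apply]
        rw [← Summable.tsum_add (summable_mul f g) (summable_mul f h)]
        congr 1; ext x; ring
      map_smul' := fun c g => by
        simp only [ContinuousMap.smul_apply, RingHom.id_apply, smul_eq_mul]
        rw [← tsum_mul_left]
        congr 1; ext x; ring }
    ‖f‖ (fun g => norm_tsum_le f g)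

@[simp] lemma Ffun_apply (g : C(unitInterval, ℂ)) :
    Ffun f g = ∑' x : unitInterval, f x * g x := rfl

lemma norm_Ffun_le : ‖Ffun f‖ ≤ ‖f‖ :=
  LinearMap.mkContinuous_norm_le _ (norm_nonneg f) _


/-- Separation radius for a finite set in a metric space. -/
lemma exists_sep (s : Finset unitInterval) :
    ∃ δ : ℝ, 0 < δ ∧ ∀ x ∈ s, ∀ y ∈ s, x ≠ y → 2 * δ ≤ dist x y := by
  by_cases h : s.offDiag.Nonempty
  · refine ⟨(s.offDiag.inf' h fun p => dist p.1 p.2) / 2, ?_, ?_⟩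
    · have : 0 < s.offDiag.inf' h fun p => dist p.1 p.2 := by
        rw [Finset.lt_inf'_iff]
        rintro ⟨x, y⟩ hxy
        rw [Finset.mem_offDiag] at hxy
        exact dist_pos.2 hxy.2.2
      linarith
    · intro x hx y hy hxy
      have : (s.offDiag.inf' h fun p => dist p.1 p.2) ≤ dist x y := by
        exact Finset.inf'_le (fun p => dist p.1 p.2)
          (Finset.mem_offDiag.2 ⟨hx, hy, hxy⟩ : (x, y) ∈ s.offDiag)
      linarith
  · refine ⟨1, one_pos, fun x hx y hy hxy => absurd ⟨(x, y), Finset.mem_offDiag.2 ⟨hx, hy, hxy⟩⟩ h⟩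

/-- A continuous function of norm at most 1 with prescribed values (of norm ≤ 1)
on a finite set. -/
lemma exists_test (s : Finset unitInterval) (c : unitInterval → ℂ) (hc : ∀ x, ‖c x‖ ≤ 1) :
    ∃ g : C(unitInterval, ℂ), ‖g‖ ≤ 1 ∧ ∀ x ∈ s, g x = c x := by
  obtain ⟨δ, hδ0, hδ⟩ := exists_sep s
  set φ : unitInterval → unitInterval → ℝ := fun x t => max 0 (1 - dist t x / δ) with hφ
  have φcont : ∀ x, Continuous fun t => φ x t := by
    intro x
    apply continuous_const.max
    exact continuous_const.sub ((continuous_id.dist continuous_const).div_const δ)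
  have φ01 : ∀ x t, 0 ≤ φ x t ∧ φ x t ≤ 1 := by
    intro x t
    refine ⟨le_max_left _ _, max_le (by norm_num) ?_⟩
    have : 0 ≤ dist t x / δ := div_nonneg dist_nonneg hδ0.le
    linarith
  have φ_self : ∀ x, φ x x = 1 := by
    intro x; simp [hφ]
  have φ_zero : ∀ x t, δ ≤ dist t x → φ x t = 0 := by
    intro x t h
    have : 1 - dist t x / δ ≤ 0 := by
      rw [sub_nonpos, le_div_iff₀ hδ0]; linarith
    simp [hφ, max_eq_left this]
  refine ⟨⟨fun t => ∑ x ∈ s, c x * (φ x t : ℂ), ?_⟩, ?_, ?_⟩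
  · exact continuous_finset_sum _ fun x _ =>
      continuous_const.mul (Complex.continuous_ofReal.comp (φcont x))
  · rw [ContinuousMap.norm_le _ zero_le_one]
    intro t
    simp only [ContinuousMap.coe_mk]
    by_cases h : ∃ x₀ ∈ s, dist t x₀ < δ
    · obtain ⟨x₀, hx₀s, hx₀⟩ := h
      rw [Finset.sum_eq_single x₀ (fun x hx hne => ?_) (fun h => absurd hx₀s h)]
      · calc ‖c x₀ * (φ x₀ t : ℂ)‖ = ‖c x₀‖ * |φ x₀ t| := by
              rw [norm_mul, Complex.norm_real, Real.norm_eq_abs]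
          _ ≤ 1 * 1 := by
              apply mul_le_mul (hc x₀) _ (abs_nonneg _) zero_le_one
              rw [abs_of_nonneg (φ01 x₀ t).1]; exact (φ01 x₀ t).2
          _ = 1 := one_mul 1
      · have h2 : 2 * δ ≤ dist x₀ x := hδ x₀ hx₀s x hx (fun e => hne e.symm)
        have : δ ≤ dist t x := by
          have := dist_triangle x₀ t x
          rw [dist_comm x₀ t] at this
          linarith
        rw [φ_zero x t this]; simp
    · push_neg at h
      rw [Finset.sum_eq_zero fun x hx => ?_]
      · simp
      · rw [φ_zero x t (h x hx)]; simp
  · intro x hx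
    simp only [ContinuousMap.coe_mk]
    rw [Finset.sum_eq_single x (fun y hy hne => ?_) (fun h => absurd hx h)]
    · rw [φ_self]; simp
    · have h2 : 2 * δ ≤ dist x y := hδ x hx y hy (fun e => hne e.symm)
      have : δ ≤ dist x y := by linarith
      rw [φ_zero y x this]; simp

noncomputable def sgn (z : ℂ) : ℂ := (starRingEnd ℂ) z / ‖z‖

lemma norm_sgn_le (z : ℂ) : ‖sgn z‖ ≤ 1 := by
  rcases eq_or_ne z 0 with rfl | hz
  · simp [sgn]
  · rw [sgn, norm_div, RingHomIsometric.norm_map]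
    simp only [Complex.norm_real, Real.norm_eq_abs, abs_of_nonneg (norm_nonneg z)]
    rw [div_self (norm_ne_zero_iff.2 hz)]

lemma mul_sgn (z : ℂ) : z * sgn z = (‖z‖ : ℂ) := by
  rcases eq_or_ne z 0 with rfl | hz
  · simp [sgn]
  · rw [sgn, mul_div_assoc', Complex.mul_conj']
    rw [div_eq_iff (by exact_mod_cast norm_ne_zero_iff.2 hz)]
    norm_cast
    rw [sq]

lemma norm_le_norm_Ffun (f : lp (fun _ : unitInterval => ℂ) 1) : ‖f‖ ≤ ‖Ffun f‖ := by
  refine le_of_forall_pos_le_add fun ε hε => ?_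
  -- choose a finset capturing most of the norm
  obtain ⟨s, hs⟩ : ∃ s : Finset unitInterval, ‖f‖ - ε / 2 < ∑ x ∈ s, ‖f x‖ := by
    have := (tendsto_order.1 (hasSum_norm' f)).1 (‖f‖ - ε / 2) (by linarith)
    exact this.exists
  have htail : ∑' x : {x : unitInterval // x ∉ s}, ‖f x‖ ≤ ε / 2 := by
    have h1 := Summable.sum_add_tsum_subtype_compl (summable_norm f) s
    rw [(hasSum_norm' f).tsum_eq] at h1
    linarith
  obtain ⟨g, hg1, hgs⟩ := exists_test s (fun x => sgn (f x)) (fun x => norm_sgn_le _)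
  have key : ‖f‖ - ε ≤ ‖Ffun f g‖ := by
    rw [Ffun_apply]
    have hsplit := Summable.sum_add_tsum_subtype_compl (summable_mul f g) s
    have hmain : ∑ x ∈ s, f x * g x = ((∑ x ∈ s, ‖f x‖ : ℝ) : ℂ) := by
      push_cast
      refine Finset.sum_congr rfl fun x hx => ?_
      rw [hgs x hx, mul_sgn]
    have htail2 : ‖∑' x : {x : unitInterval // x ∉ s}, f x * g x‖ ≤ ε / 2 := by
      calc ‖∑' x : {x : unitInterval // x ∉ s}, f x * g x‖
          ≤ ∑' x : {x : unitInterval // x ∉ s}, ‖f x * g x‖ :=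
            norm_tsum_le_tsum_norm ((summable_mul f g).norm.subtype _)
        _ ≤ ∑' x : {x : unitInterval // x ∉ s}, ‖f x‖ := by
            apply Summable.tsum_le_tsum _ ((summable_mul f g).norm.subtype _)
              ((summable_norm f).subtype _)
            intro x
            simp only [Function.comp_apply, norm_mul]
            calc ‖f x.1‖ * ‖g x.1‖ ≤ ‖f x.1‖ * 1 :=
                  mul_le_mul_of_nonneg_left
                    ((g.norm_coe_le_norm x.1).trans hg1) (norm_nonneg _)
              _ = ‖f x.1‖ := mul_one _
        _ ≤ ε / 2 := htail
    calc ‖f‖ - ε ≤ (∑ x ∈ s, ‖f x‖) - ε / 2 := by linarith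
      _ ≤ ‖∑ x ∈ s, f x * g x‖ - ‖∑' x : {x : unitInterval // x ∉ s}, f x * g x‖ := by
          rw [hmain, Complex.norm_real, Real.norm_eq_abs,
            abs_of_nonneg (Finset.sum_nonneg fun x _ => norm_nonneg _)]
          linarith
      _ ≤ ‖∑ x ∈ s, f x * g x + ∑' x : {x : unitInterval // x ∉ s}, f x * g x‖ := by
          have h := norm_add_le (∑ x ∈ s, f x * g x
            + ∑' x : {x : unitInterval // x ∉ s}, f x * g x)
            (-(∑' x : {x : unitInterval // x ∉ s}, f x * g x))
          simp only [add_neg_cancel_right, norm_neg] at h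
          linarith
      _ = ‖∑' x : unitInterval, f x * g x‖ := by rw [hsplit]
  have : ‖Ffun f g‖ ≤ ‖Ffun f‖ := by
    calc ‖Ffun f g‖ ≤ ‖Ffun f‖ * ‖g‖ := (Ffun f).le_opNorm g
      _ ≤ ‖Ffun f‖ * 1 := mul_le_mul_of_nonneg_left hg1 (ContinuousLinearMap.opNorm_nonneg _)
      _ = ‖Ffun f‖ := mul_one _
  linarith

end L1Dual

/-- The map `F : X → C([0,1], ℂ)*`, `F(f)(g) = ∑_x f(x) g(x)`, is a linear isometry from
`X = ℓ¹([0,1], ℂ)` into the continuous dual of `C([0,1], ℂ)`. -/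
theorem exists_linear_isometry_l1_into_dual_continuous :
    ∃ F : lp (fun _ : unitInterval => ℂ) 1 →ₗᵢ[ℂ]
        StrongDual ℂ C(unitInterval, ℂ),
      ∀ (f : lp (fun _ : unitInterval => ℂ) 1) (g : C(unitInterval, ℂ)),
        F f g = ∑' x : unitInterval, f x * g x := by
  refine ⟨⟨⟨⟨L1Dual.Ffun, ?_⟩, ?_⟩, ?_⟩, fun f g => rfl⟩
  · intro f h
    ext g
    simp only [ContinuousLinearMap.add_apply, L1Dual.Ffun_apply]
    rw [← Summable.tsum_add (L1Dual.summable_mul f g) (L1Dual.summable_mul h g)]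
    apply tsum_congr fun x => ?_
    rw [lp.coeFn_add, Pi.add_apply, add_mul]
  · intro c f
    ext g
    simp only [ContinuousLinearMap.smul_apply, L1Dual.Ffun_apply, RingHom.id_apply,
      smul_eq_mul]
    rw [← tsum_mul_left]
    apply tsum_congr fun x => ?_
    rw [lp.coeFn_smul, Pi.smul_apply, smul_eq_mul, mul_assoc]
  · intro f
    exact le_antisymm (L1Dual.norm_Ffun_le f) (L1Dual.norm_le_norm_Ffun f)
end
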